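/- Let P be a digital net in prime power base b. For any u ⊆ {1,…,s} and k ∈ ℕ₀^{|u|}, we have |A(u, k+1_u) ∩ P^⊥| = |V(u,k) ∩ P^⊥| · |Q(u, k+1_u, P)|, where Q(u,k+1_u,P) is the intersection of the image of the projection of V(u,k+1_u) ∩ P^⊥ onto the leading digits with (F_b∖{0})^{|u|}. -/

import Mathlib

open Finset

noncomputable section

/-- the `i`-th `b`-adic digit of a natural number `k`. -/
def ndigit (b k i : ℕ) : ℕ := k / b ^ i % b

/-- the `(i+1)`-st `b`-adic digit of a real number `x ∈ [0,1)`
(the unique expansion with infinitely many digits `≠ b-1`). -/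
def rdigit (b : ℕ) (x : ℝ) (i : ℕ) : ℕ := (⌊(b : ℝ) ^ (i + 1) * x⌋).toNat % b

/-- the primitive `b`-th root of unity `ω_b = exp(2πi/b)`. -/
def omg (b : ℕ) : ℂ := Complex.exp (2 * Real.pi * Complex.I / b)

/-- embed a digit (element of `Z_b`) into the finite field `F` via the bijection `φ`. -/
def toF {F : Type} [Field F] [Fintype F] (φ : Fin (Fintype.card F) ≃ F) (a : ℕ) : F :=
  φ ⟨a % Fintype.card F, Nat.mod_lt a Fintype.card_pos⟩

/-- map a field element back to a digit in `Z_b` via `φ⁻¹`. -/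
def fromF {F : Type} [Field F] [Fintype F] (φ : Fin (Fintype.card F) ≃ F) (a : F) : ℕ :=
  (φ.symm a : ℕ)

/-- the `k`-th `b`-adic Walsh function, `b = |F|`,
`wal_k(x) = ω_b^{φ⁻¹(φ(κ₀)φ(ξ₁)) + φ⁻¹(φ(κ₁)φ(ξ₂)) + ⋯}`. -/
def wal {F : Type} [Field F] [Fintype F] (φ : Fin (Fintype.card F) ≃ F) (k : ℕ) (x : ℝ) : ℂ :=
  omg (Fintype.card F) ^
    ∑ i ∈ Finset.range k,
      fromF φ (toF φ (ndigit (Fintype.card F) k i) * toF φ (rdigit (Fintype.card F) x i))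

/-- the multivariate `b`-adic Walsh function `wal_k(x) = ∏_j wal_{k_j}(x_j)`. -/
def walv {F : Type} [Field F] [Fintype F] {s : ℕ} (φ : Fin (Fintype.card F) ≃ F)
    (k : Fin s → ℕ) (x : Fin s → ℝ) : ℂ :=
  ∏ j, wal φ (k j) (x j)

/-- the `j`-th coordinate of the `h`-th point of the digital net with generating
matrices `C_1,…,C_s` (with `n` rows, `m` columns, rows of index `≥ n` unused). -/
def dnet {F : Type} [Field F] [Fintype F] {s m : ℕ} (φ : Fin (Fintype.card F) ≃ F)
    (C : Fin s → ℕ → Fin m → F) (n : ℕ) (h : ℕ) (j : Fin s) : ℝ :=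
  ∑ i ∈ Finset.range n,
    (fromF φ (∑ c, C j i c * toF φ (ndigit (Fintype.card F) h (c : ℕ))) : ℝ) /
      (Fintype.card F : ℝ) ^ (i + 1)

/-- membership in the dual net `P^⊥`:
`C_1^⊤ ν_n(k_1) + ⋯ + C_s^⊤ ν_n(k_s) = 0 ∈ F^m`. -/
def inDual {F : Type} [Field F] [Fintype F] {s m : ℕ} (φ : Fin (Fintype.card F) ≃ F)
    (C : Fin s → ℕ → Fin m → F) (n : ℕ) (k : Fin s → ℕ) : Prop :=
  ∀ c : Fin m,
    ∑ j, ∑ i ∈ Finset.range n, C j i c * toF φ (ndigit (Fintype.card F) (k j) i) = 0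

/-- `V(u,k) = {ℓ ∈ ℕ₀^s : ℓ_j < b^{k_j} if j ∈ u, ℓ_j = 0 otherwise}`. -/
def Vset (b : ℕ) {s : ℕ} (u : Finset (Fin s)) (k : Fin s → ℕ) : Finset (Fin s → ℕ) :=
  Fintype.piFinset fun j => Finset.range (if j ∈ u then b ^ k j else 1)

/-- `A(u,l) = {ℓ ∈ ℕ₀^s : b^{l_j-1} ≤ ℓ_j < b^{l_j} if j ∈ u, ℓ_j = 0 otherwise}`. -/
def Aset (b : ℕ) {s : ℕ} (u : Finset (Fin s)) (l : Fin s → ℕ) : Finset (Fin s → ℕ) :=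
  (Vset b u l).filter fun ℓ => ∀ j ∈ u, b ^ (l j - 1) ≤ ℓ j

/-- `k + 1_v`: add one to the components in `v`. -/
def plusOne {s : ℕ} (k : Fin s → ℕ) (v : Finset (Fin s)) : Fin s → ℕ :=
  fun j => if j ∈ v then k j + 1 else k j

/-- the gain coefficient `Γ_{u,k}` of an `N`-element point set in base `b`. -/
def gain {s : ℕ} (b N : ℕ) (x : Fin N → Fin s → ℝ) (u : Finset (Fin s))
    (k : Fin s → ℕ) : ℝ :=
  (1 / N) * ∑ i, ∑ i', ∏ j ∈ u,
    ((b * (if ⌊(b : ℝ) ^ (k j + 1) * x i j⌋ = ⌊(b : ℝ) ^ (k j + 1) * x i' j⌋ then (1:ℝ) else 0) -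
        (if ⌊(b : ℝ) ^ (k j) * x i j⌋ = ⌊(b : ℝ) ^ (k j) * x i' j⌋ then (1:ℝ) else 0)) /
      (b - 1))

/-- `C_{u,k}`: the matrix stacking the first `k_j` rows of `C_j` for `j ∈ u`
(a generating matrix `C_j` having `n` rows). -/
def Cuk {F : Type} [Field F] [Fintype F] {s m : ℕ} (C : Fin s → ℕ → Fin m → F) (n : ℕ)
    (u : Finset (Fin s)) (k : Fin s → ℕ) :
    Matrix ((j : Fin s) × Fin (min (if j ∈ u then k j else 0) n)) (Fin m) F :=
  fun p c => C p.1 (p.2 : ℕ) c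

/-- `C` generates a digital `(t,m,s)`-net in base `b = |F|`:
`C_{u,k}` has full row rank whenever `|k| ≤ m - t`. -/
def IsDigitalTNet {F : Type} [Field F] [Fintype F] {s m : ℕ}
    (C : Fin s → ℕ → Fin m → F) (n : ℕ) (t : ℕ) : Prop :=
  ∀ u : Finset (Fin s), ∀ k : Fin s → ℕ,
    (∑ j ∈ u, k j) + t ≤ m → (Cuk C n u k).rank = ∑ j ∈ u, k j

/-- the upper bound `B(u,k) = b^{m - rank(C_{u,k})} (b-1)^{rank(C_{u,k}) - rank(C_{u,k+1_u})}`. -/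
def Bcoef {F : Type} [Field F] [Fintype F] {s m : ℕ} (C : Fin s → ℕ → Fin m → F) (n : ℕ)
    (u : Finset (Fin s)) (k : Fin s → ℕ) : ℝ :=
  (Fintype.card F : ℝ) ^ ((m : ℤ) - ((Cuk C n u k).rank : ℤ)) *
    ((Fintype.card F : ℝ) - 1) ^
      (((Cuk C n u k).rank : ℤ) - ((Cuk C n u (plusOne k u)).rank : ℤ))

/-- `t*_u = m + 1 - min{|k| : k ∈ ℕ^{|u|}, C_{u,k} not full row rank}`. -/
def tstar {F : Type} [Field F] [Fintype F] {s m : ℕ} (C : Fin s → ℕ → Fin m → F) (n : ℕ)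
    (u : Finset (Fin s)) : ℤ :=
  (m : ℤ) + 1 -
    (sInf {r : ℕ | ∃ k : Fin s → ℕ, (∀ j ∈ u, 1 ≤ k j) ∧
      (Cuk C n u k).rank ≠ ∑ j ∈ u, k j ∧ r = ∑ j ∈ u, k j} : ℕ)

end

section Aux

open Finset

variable {F : Type} [Field F] [Fintype F] (φ : Fin (Fintype.card F) ≃ F)

private lemma fromF_lt (x : F) : fromF φ x < Fintype.card F := (φ.symm x).2

private lemma fromF_toF (x : ℕ) : fromF φ (toF φ x) = x % Fintype.card F := by
  simp [fromF, toF]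

private lemma toF_fromF (x : F) : toF φ (fromF φ x) = x := by
  simp only [toF]
  rw [Equiv.apply_eq_iff_eq_symm_apply]
  exact Fin.ext (by simpa [fromF] using Nat.mod_eq_of_lt (φ.symm x).2)

private lemma toF_zero (hφ : φ ⟨0, Fintype.card_pos⟩ = 0) : toF φ 0 = 0 := by
  simp only [toF, Nat.zero_mod]; exact hφ

private lemma fromF_zero (hφ : φ ⟨0, Fintype.card_pos⟩ = 0) : fromF φ (0 : F) = 0 := by
  rw [fromF, ← hφ, Equiv.symm_apply_apply]

private lemma toF_inj {a c : ℕ} (ha : a < Fintype.card F) (hc : c < Fintype.card F)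
    (h : toF φ a = toF φ c) : a = c := by
  have h2 := congrArg Fin.val (φ.injective h)
  simpa [Nat.mod_eq_of_lt ha, Nat.mod_eq_of_lt hc] using h2

private lemma toF_eq_zero_iff (hφ : φ ⟨0, Fintype.card_pos⟩ = 0) {a : ℕ}
    (ha : a < Fintype.card F) : toF φ a = 0 ↔ a = 0 :=
  ⟨fun h => toF_inj φ ha Fintype.card_pos (h.trans (toF_zero φ hφ).symm),
   fun h => h ▸ toF_zero φ hφ⟩

private lemma ndigit_lt {b : ℕ} (hb : 0 < b) (a i : ℕ) : ndigit b a i < b :=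
  Nat.mod_lt _ hb

private lemma ndigit_eq_zero {b a i : ℕ} (h : a < b ^ i) : ndigit b a i = 0 := by
  simp [ndigit, Nat.div_eq_of_lt h]

/-- assemble a number from prescribed `F`-digits -/
private def dmap (L : ℕ) (g : ℕ → F) : ℕ :=
  ∑ i ∈ Finset.range L, fromF φ (g i) * Fintype.card F ^ i

private lemma dmap_succ (L : ℕ) (g : ℕ → F) :
    dmap φ (L + 1) g = dmap φ L g + fromF φ (g L) * Fintype.card F ^ L := by
  simp [dmap, Finset.sum_range_succ]

private lemma dmap_lt (L : ℕ) (g : ℕ → F) : dmap φ L g < Fintype.card F ^ L := by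
  induction L with
  | zero => simp [dmap]
  | succ L ih =>
    rw [dmap_succ]
    have h2 : fromF φ (g L) + 1 ≤ Fintype.card F := fromF_lt φ (g L)
    have h3 : (fromF φ (g L) + 1) * Fintype.card F ^ L ≤ Fintype.card F * Fintype.card F ^ L :=
      Nat.mul_le_mul_right _ h2
    calc dmap φ L g + fromF φ (g L) * Fintype.card F ^ L
        < Fintype.card F ^ L + fromF φ (g L) * Fintype.card F ^ L := by omega
      _ = (fromF φ (g L) + 1) * Fintype.card F ^ L := by ring
      _ ≤ Fintype.card F * Fintype.card F ^ L := h3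
      _ = Fintype.card F ^ (L + 1) := by ring

private lemma ndigit_dmap (L : ℕ) (g : ℕ → F) (i : ℕ) :
    ndigit (Fintype.card F) (dmap φ L g) i = if i < L then fromF φ (g i) else 0 := by
  have hb : 0 < Fintype.card F := Fintype.card_pos
  induction L with
  | zero => simp [dmap, ndigit]
  | succ L ih =>
    rcases lt_trichotomy i L with h | rfl | h
    · have hiL : ndigit (Fintype.card F) (dmap φ L g) i = fromF φ (g i) := by
        rw [ih, if_pos h]
      rw [if_pos (by omega), ← hiL, dmap_succ]
      simp only [ndigit]
      have hpow : Fintype.card F ^ L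
          = Fintype.card F ^ i * (Fintype.card F ^ (L - i - 1) * Fintype.card F) := by
        rw [← pow_succ, ← pow_add]; congr 1; omega
      rw [show fromF φ (g L) * Fintype.card F ^ L
            = Fintype.card F ^ i * (fromF φ (g L) * Fintype.card F ^ (L - i - 1)
                * Fintype.card F) by rw [hpow]; ring,
        Nat.add_mul_div_left _ _ (pow_pos hb i), Nat.add_mul_mod_self_right]
    · rw [dmap_succ, if_pos (Nat.lt_succ_self i)]
      simp only [ndigit]
      rw [Nat.add_mul_div_right _ _ (pow_pos hb i),
        Nat.div_eq_of_lt (dmap_lt φ i g), Nat.zero_add,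
        Nat.mod_eq_of_lt (fromF_lt φ (g i))]
    · rw [if_neg (by omega)]
      exact ndigit_eq_zero (lt_of_lt_of_le (dmap_lt φ (L + 1) g)
        (Nat.pow_le_pow_right hb (by omega)))

private lemma toF_ndigit_dmap (hφ : φ ⟨0, Fintype.card_pos⟩ = 0) (L : ℕ) (g : ℕ → F) (i : ℕ) :
    toF φ (ndigit (Fintype.card F) (dmap φ L g) i) = if i < L then g i else 0 := by
  by_cases h : i < L <;>
    simp [ndigit_dmap, h, toF_fromF φ, toF_zero φ hφ]

private lemma dmap_zero (hφ : φ ⟨0, Fintype.card_pos⟩ = 0) (L : ℕ) (g : ℕ → F)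
    (hg : ∀ i, i < L → g i = 0) : dmap φ L g = 0 := by
  simp only [dmap]
  refine Finset.sum_eq_zero fun i hi => ?_
  rw [hg i (Finset.mem_range.mp hi), fromF_zero φ hφ, zero_mul]

private lemma sum_ndigit_mul (b a L : ℕ) :
    ∑ i ∈ Finset.range L, ndigit b a i * b ^ i = a % b ^ L := by
  induction L with
  | zero => simp [Nat.mod_one]
  | succ L ih =>
    rw [Finset.sum_range_succ, ih, pow_succ, Nat.mod_mul]
    simp only [ndigit]
    ring

private lemma eq_of_ndigit_eq {b L a c : ℕ} (ha : a < b ^ L) (hc : c < b ^ L)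
    (h : ∀ i, ndigit b a i = ndigit b c i) : a = c := by
  have h1 := sum_ndigit_mul b a L
  have h2 := sum_ndigit_mul b c L
  rw [Nat.mod_eq_of_lt ha] at h1
  rw [Nat.mod_eq_of_lt hc] at h2
  rw [← h1, ← h2]
  exact Finset.sum_congr rfl fun i _ => by rw [h i]

/-- digits of `dmap` of a binary operation on digits -/
private lemma dop_digit (hφ : φ ⟨0, Fintype.card_pos⟩ = 0) (op : F → F → F)
    (hop : op 0 0 = 0) {L a c : ℕ} (ha : a < Fintype.card F ^ L)
    (hc : c < Fintype.card F ^ L) (i : ℕ) :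
    toF φ (ndigit (Fintype.card F)
        (dmap φ L (fun t => op (toF φ (ndigit (Fintype.card F) a t))
          (toF φ (ndigit (Fintype.card F) c t)))) i)
      = op (toF φ (ndigit (Fintype.card F) a i)) (toF φ (ndigit (Fintype.card F) c i)) := by
  rw [toF_ndigit_dmap φ hφ]
  by_cases h : i < L
  · rw [if_pos h]
  · rw [if_neg h]
    have hbi : Fintype.card F ^ L ≤ Fintype.card F ^ i :=
      Nat.pow_le_pow_right Fintype.card_pos (le_of_not_gt h)
    rw [ndigit_eq_zero (lt_of_lt_of_le ha hbi), ndigit_eq_zero (lt_of_lt_of_le hc hbi),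
      toF_zero φ hφ, hop]

private lemma topdigit_ne_zero (hφ : φ ⟨0, Fintype.card_pos⟩ = 0) {a L : ℕ}
    (ha : a < Fintype.card F ^ (L + 1)) :
    toF φ (ndigit (Fintype.card F) a L) ≠ 0 ↔ Fintype.card F ^ L ≤ a := by
  have hb : 0 < Fintype.card F := Fintype.card_pos
  rw [Ne, toF_eq_zero_iff φ hφ (ndigit_lt hb a L)]
  simp only [ndigit]
  have hq : a / Fintype.card F ^ L < Fintype.card F := by
    rw [Nat.div_lt_iff_lt_mul (pow_pos hb L), ← pow_succ']; exact ha
  rw [Nat.mod_eq_of_lt hq, Nat.div_eq_zero_iff, not_or, not_lt]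
  exact and_iff_right (pow_pos hb L).ne'

end Aux

private lemma dsum_digit {F : Type} [Field F] [Fintype F] (φ : Fin (Fintype.card F) ≃ F)
    (hφ : φ ⟨0, Fintype.card_pos⟩ = 0) {L a c : ℕ}
    (ha : a < Fintype.card F ^ L) (hc : c < Fintype.card F ^ L) (i : ℕ) :
    toF φ (ndigit (Fintype.card F) (dmap φ L (fun t =>
        toF φ (ndigit (Fintype.card F) a t) + toF φ (ndigit (Fintype.card F) c t))) i)
      = toF φ (ndigit (Fintype.card F) a i) + toF φ (ndigit (Fintype.card F) c i) :=
  dop_digit φ hφ (· + ·) (by simp) ha hc i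

private lemma ddiff_digit {F : Type} [Field F] [Fintype F] (φ : Fin (Fintype.card F) ≃ F)
    (hφ : φ ⟨0, Fintype.card_pos⟩ = 0) {L a c : ℕ}
    (ha : a < Fintype.card F ^ L) (hc : c < Fintype.card F ^ L) (i : ℕ) :
    toF φ (ndigit (Fintype.card F) (dmap φ L (fun t =>
        toF φ (ndigit (Fintype.card F) a t) - toF φ (ndigit (Fintype.card F) c t))) i)
      = toF φ (ndigit (Fintype.card F) a i) - toF φ (ndigit (Fintype.card F) c i) :=
  dop_digit φ hφ (· - ·) (by simp) ha hc i

/-- `|A(u,k+1_u) ∩ P^⊥| = |V(u,k) ∩ P^⊥| ⬝ |Q(u,k+1_u,P)|`, where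
`Q(u,k+1_u,P)` is the image of the top-digit projection of `V(u,k+1_u) ∩ P^⊥`
intersected with `(F∖{0})^{|u|}`. -/
theorem stmt9 {F : Type} [Field F] [Fintype F] {s m : ℕ}
    (φ : Fin (Fintype.card F) ≃ F) (hφ : φ ⟨0, Fintype.card_pos⟩ = 0)
    (C : Fin s → ℕ → Fin m → F) (n : ℕ)
    (u : Finset (Fin s)) (k : Fin s → ℕ) :
    Set.ncard {ℓ : Fin s → ℕ |
        ℓ ∈ Aset (Fintype.card F) u (plusOne k u) ∧ inDual φ C n ℓ} =
      Set.ncard {ℓ : Fin s → ℕ | ℓ ∈ Vset (Fintype.card F) u k ∧ inDual φ C n ℓ} *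
      Set.ncard {y : {j : Fin s // j ∈ u} → F |
        (∃ ℓ : Fin s → ℕ, ℓ ∈ Vset (Fintype.card F) u (plusOne k u) ∧
          inDual φ C n ℓ ∧
          ∀ j : {j : Fin s // j ∈ u},
            y j = toF φ (ndigit (Fintype.card F) (ℓ (j : Fin s)) (k (j : Fin s)))) ∧
        ∀ j : {j : Fin s // j ∈ u}, y j ≠ 0} := by
  classical
  have hb1 : 0 < Fintype.card F := Fintype.card_pos
  set T : (Fin s → ℕ) → ({j : Fin s // j ∈ u} → F) :=
    fun ℓ j => toF φ (ndigit (Fintype.card F) (ℓ (j : Fin s)) (k (j : Fin s))) with hT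
  set W : Finset (Fin s → ℕ) :=
    (Vset (Fintype.card F) u (plusOne k u)).filter (fun ℓ => inDual φ C n ℓ) with hW
  set Kr : Finset (Fin s → ℕ) :=
    (Vset (Fintype.card F) u k).filter (fun ℓ => inDual φ C n ℓ) with hKr
  set Q : Finset ({j : Fin s // j ∈ u} → F) :=
    (W.image T).filter (fun y => ∀ j, y j ≠ 0) with hQ
  have memV : ∀ (κ ℓ : Fin s → ℕ), ℓ ∈ Vset (Fintype.card F) u κ ↔
      ∀ j, ℓ j < (if j ∈ u then Fintype.card F ^ κ j else 1) := fun κ ℓ => by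
    simp [Vset, Fintype.mem_piFinset]
  have hboundW : ∀ ℓ, ℓ ∈ Vset (Fintype.card F) u (plusOne k u) →
      ∀ j, ℓ j < Fintype.card F ^ (plusOne k u j) := by
    intro ℓ hℓ j
    have h := (memV _ ℓ).mp hℓ j
    by_cases hj : j ∈ u
    · simpa [hj] using h
    · have h1 : ℓ j < 1 := by simpa [hj] using h
      exact lt_of_lt_of_le h1 (Nat.one_le_pow _ _ hb1)
  have hboundK : ∀ ℓ, ℓ ∈ Vset (Fintype.card F) u k →
      ∀ j, ℓ j < Fintype.card F ^ (plusOne k u j) := by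
    intro ℓ hℓ j
    have h := (memV _ ℓ).mp hℓ j
    by_cases hj : j ∈ u
    · have h1 : ℓ j < Fintype.card F ^ k j := by simpa [hj] using h
      exact lt_of_lt_of_le h1 (Nat.pow_le_pow_right hb1 (by simp [plusOne, hj]))
    · have h1 : ℓ j < 1 := by simpa [hj] using h
      exact lt_of_lt_of_le h1 (Nat.one_le_pow _ _ hb1)
  have hzero : ∀ (κ ℓ : Fin s → ℕ), ℓ ∈ Vset (Fintype.card F) u κ →
      ∀ j, j ∉ u → ℓ j = 0 := by
    intro κ ℓ hℓ j hj
    have h := (memV _ ℓ).mp hℓ j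
    have h1 : ℓ j < 1 := by simpa [hj] using h
    omega
  -- set equalities
  have e1 : {ℓ : Fin s → ℕ | ℓ ∈ Aset (Fintype.card F) u (plusOne k u) ∧ inDual φ C n ℓ}
      = ↑(W.filter fun ℓ => ∀ j : {j : Fin s // j ∈ u}, T ℓ j ≠ 0) := by
    ext ℓ
    constructor
    · rintro ⟨hA, hD⟩
      obtain ⟨hV, hge⟩ := Finset.mem_filter.mp hA
      refine Finset.mem_coe.mpr (Finset.mem_filter.mpr ⟨Finset.mem_filter.mpr ⟨hV, hD⟩, ?_⟩)
      rintro ⟨j, hj⟩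
      have hlt : ℓ j < Fintype.card F ^ (k j + 1) := by
        have h := (memV _ ℓ).mp hV j; simpa [hj, plusOne] using h
      have hge' : Fintype.card F ^ (k j) ≤ ℓ j := by
        have h := hge j hj; simpa [plusOne, hj] using h
      simp only [hT]
      exact (topdigit_ne_zero φ hφ hlt).mpr hge'
    · intro h
      obtain ⟨hWm, hne⟩ := Finset.mem_filter.mp (Finset.mem_coe.mp h)
      obtain ⟨hV, hD⟩ := Finset.mem_filter.mp hWm
      refine ⟨Finset.mem_filter.mpr ⟨hV, ?_⟩, hD⟩
      intro j hj
      have hlt : ℓ j < Fintype.card F ^ (k j + 1) := by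
        have h2 := (memV _ ℓ).mp hV j; simpa [hj, plusOne] using h2
      have h3 := hne ⟨j, hj⟩
      simp only [hT] at h3
      have h4 := (topdigit_ne_zero φ hφ hlt).mp h3
      simpa [plusOne, hj] using h4
  have e2 : {ℓ : Fin s → ℕ | ℓ ∈ Vset (Fintype.card F) u k ∧ inDual φ C n ℓ} = ↑Kr := by
    ext ℓ
    simp [hKr, Finset.mem_filter]
  have e3 : {y : {j : Fin s // j ∈ u} → F |
      (∃ ℓ : Fin s → ℕ, ℓ ∈ Vset (Fintype.card F) u (plusOne k u) ∧
        inDual φ C n ℓ ∧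
        ∀ j : {j : Fin s // j ∈ u},
          y j = toF φ (ndigit (Fintype.card F) (ℓ (j : Fin s)) (k (j : Fin s)))) ∧
      ∀ j : {j : Fin s // j ∈ u}, y j ≠ 0} = ↑Q := by
    ext y
    simp only [Set.mem_setOf_eq, Finset.mem_coe, hQ, Finset.mem_filter, Finset.mem_image,
      hW, hT]
    constructor
    · rintro ⟨⟨ℓ, h1, h2, h3⟩, h4⟩
      exact ⟨⟨ℓ, ⟨h1, h2⟩, funext fun j => (h3 j).symm⟩, h4⟩
    · rintro ⟨⟨ℓ, hm, heq⟩, h4⟩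
      obtain ⟨h1, h2⟩ := hm
      exact ⟨⟨ℓ, h1, h2, fun j => (congrFun heq j).symm⟩, h4⟩
  rw [e1, e2, e3, Set.ncard_coe_finset, Set.ncard_coe_finset, Set.ncard_coe_finset]
  -- dual closure under digitwise sum / difference
  have dualSum : ∀ ℓ ℓ₀ : Fin s → ℕ, (∀ j, ℓ j < Fintype.card F ^ plusOne k u j) →
      (∀ j, ℓ₀ j < Fintype.card F ^ plusOne k u j) → inDual φ C n ℓ → inDual φ C n ℓ₀ →
      inDual φ C n (fun j => dmap φ (plusOne k u j)
        (fun t => toF φ (ndigit (Fintype.card F) (ℓ j) t)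
          + toF φ (ndigit (Fintype.card F) (ℓ₀ j) t))) := by
    intro ℓ ℓ₀ h1 h2 hd1 hd2 c
    show (∑ j, ∑ i ∈ Finset.range n, C j i c * toF φ (ndigit (Fintype.card F)
      (dmap φ (plusOne k u j) (fun t => toF φ (ndigit (Fintype.card F) (ℓ j) t)
        + toF φ (ndigit (Fintype.card F) (ℓ₀ j) t))) i)) = 0
    calc (∑ j, ∑ i ∈ Finset.range n, C j i c * toF φ (ndigit (Fintype.card F)
          (dmap φ (plusOne k u j) (fun t => toF φ (ndigit (Fintype.card F) (ℓ j) t)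
            + toF φ (ndigit (Fintype.card F) (ℓ₀ j) t))) i))
        = ∑ j, ((∑ i ∈ Finset.range n, C j i c * toF φ (ndigit (Fintype.card F) (ℓ j) i))
            + ∑ i ∈ Finset.range n, C j i c * toF φ (ndigit (Fintype.card F) (ℓ₀ j) i)) := by
          refine Finset.sum_congr rfl fun j _ => ?_
          rw [← Finset.sum_add_distrib]
          refine Finset.sum_congr rfl fun i _ => ?_
          rw [dsum_digit φ hφ (h1 j) (h2 j) i, mul_add]
      _ = (∑ j, ∑ i ∈ Finset.range n, C j i c * toF φ (ndigit (Fintype.card F) (ℓ j) i))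
            + ∑ j, ∑ i ∈ Finset.range n, C j i c * toF φ (ndigit (Fintype.card F) (ℓ₀ j) i) :=
          Finset.sum_add_distrib
      _ = 0 := by rw [hd1 c, hd2 c, add_zero]
  have dualDiff : ∀ ℓ ℓ₀ : Fin s → ℕ, (∀ j, ℓ j < Fintype.card F ^ plusOne k u j) →
      (∀ j, ℓ₀ j < Fintype.card F ^ plusOne k u j) → inDual φ C n ℓ → inDual φ C n ℓ₀ →
      inDual φ C n (fun j => dmap φ (plusOne k u j)
        (fun t => toF φ (ndigit (Fintype.card F) (ℓ j) t)
          - toF φ (ndigit (Fintype.card F) (ℓ₀ j) t))) := by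
    intro ℓ ℓ₀ h1 h2 hd1 hd2 c
    show (∑ j, ∑ i ∈ Finset.range n, C j i c * toF φ (ndigit (Fintype.card F)
      (dmap φ (plusOne k u j) (fun t => toF φ (ndigit (Fintype.card F) (ℓ j) t)
        - toF φ (ndigit (Fintype.card F) (ℓ₀ j) t))) i)) = 0
    calc (∑ j, ∑ i ∈ Finset.range n, C j i c * toF φ (ndigit (Fintype.card F)
          (dmap φ (plusOne k u j) (fun t => toF φ (ndigit (Fintype.card F) (ℓ j) t)
            - toF φ (ndigit (Fintype.card F) (ℓ₀ j) t))) i))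
        = ∑ j, ((∑ i ∈ Finset.range n, C j i c * toF φ (ndigit (Fintype.card F) (ℓ j) i))
            - ∑ i ∈ Finset.range n, C j i c * toF φ (ndigit (Fintype.card F) (ℓ₀ j) i)) := by
          refine Finset.sum_congr rfl fun j _ => ?_
          rw [← Finset.sum_sub_distrib]
          refine Finset.sum_congr rfl fun i _ => ?_
          rw [ddiff_digit φ hφ (h1 j) (h2 j) i, mul_sub]
      _ = (∑ j, ∑ i ∈ Finset.range n, C j i c * toF φ (ndigit (Fintype.card F) (ℓ j) i))
            - ∑ j, ∑ i ∈ Finset.range n, C j i c * toF φ (ndigit (Fintype.card F) (ℓ₀ j) i) :=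
          Finset.sum_sub_distrib _ _
      _ = 0 := by rw [hd1 c, hd2 c, sub_zero]
  -- fiber cardinality
  have fiber : ∀ y ∈ W.image T, (W.filter fun ℓ => T ℓ = y).card = Kr.card := by
    intro y hy
    obtain ⟨ℓ₀, hℓ₀W, hTℓ₀⟩ := Finset.mem_image.mp hy
    obtain ⟨hℓ₀V, hℓ₀D⟩ := Finset.mem_filter.mp hℓ₀W
    have hb₀ : ∀ j, ℓ₀ j < Fintype.card F ^ (plusOne k u j) := hboundW ℓ₀ hℓ₀V
    symm
    refine Finset.card_bij (fun ℓ _ => fun j => dmap φ (plusOne k u j)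
      (fun t => toF φ (ndigit (Fintype.card F) (ℓ j) t)
        + toF φ (ndigit (Fintype.card F) (ℓ₀ j) t))) ?_ ?_ ?_
    · -- maps into the fiber
      intro ℓ hℓ
      obtain ⟨hℓV, hℓD⟩ := Finset.mem_filter.mp hℓ
      have hbℓ := hboundK ℓ hℓV
      refine Finset.mem_filter.mpr ⟨Finset.mem_filter.mpr ⟨?_, ?_⟩, ?_⟩
      · refine (memV _ _).mpr fun j => ?_
        show dmap φ (plusOne k u j) (fun t => toF φ (ndigit (Fintype.card F) (ℓ j) t)
            + toF φ (ndigit (Fintype.card F) (ℓ₀ j) t))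
          < if j ∈ u then Fintype.card F ^ (plusOne k u j) else 1
        by_cases hj : j ∈ u
        · rw [if_pos hj]; exact dmap_lt φ _ _
        · rw [if_neg hj]
          have hz : dmap φ (plusOne k u j)
              (fun t => toF φ (ndigit (Fintype.card F) (ℓ j) t)
                + toF φ (ndigit (Fintype.card F) (ℓ₀ j) t)) = 0 := by
            refine dmap_zero φ hφ _ _ fun t _ => ?_
            rw [hzero _ ℓ hℓV j hj, hzero _ ℓ₀ hℓ₀V j hj]
            simp [ndigit, toF_zero φ hφ]
          rw [hz]; norm_num
      · exact dualSum ℓ ℓ₀ hbℓ hb₀ hℓD hℓ₀D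
      · funext j
        simp only [hT]
        rw [dsum_digit φ hφ (hbℓ j.1) (hb₀ j.1) (k j.1)]
        have hℓsmall : ℓ j.1 < Fintype.card F ^ (k j.1) := by
          have h := (memV _ ℓ).mp hℓV j.1; simpa [j.2] using h
        rw [ndigit_eq_zero hℓsmall, toF_zero φ hφ, zero_add]
        have h := congrFun hTℓ₀ j
        simp only [hT] at h
        exact h
    · -- injectivity
      intro ℓ₁ h₁ ℓ₂ h₂ heq
      obtain ⟨h₁V, _⟩ := Finset.mem_filter.mp h₁
      obtain ⟨h₂V, _⟩ := Finset.mem_filter.mp h₂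
      funext j
      have hb₁ := hboundK ℓ₁ h₁V j
      have hb₂ := hboundK ℓ₂ h₂V j
      refine eq_of_ndigit_eq hb₁ hb₂ fun i => ?_
      have e₁ := dsum_digit φ hφ hb₁ (hb₀ j) i
      have e₂ := dsum_digit φ hφ hb₂ (hb₀ j) i
      have e : dmap φ (plusOne k u j) (fun t => toF φ (ndigit (Fintype.card F) (ℓ₁ j) t)
            + toF φ (ndigit (Fintype.card F) (ℓ₀ j) t))
          = dmap φ (plusOne k u j) (fun t => toF φ (ndigit (Fintype.card F) (ℓ₂ j) t)
            + toF φ (ndigit (Fintype.card F) (ℓ₀ j) t)) := congrFun heq j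
      rw [e] at e₁
      have e₃ := e₁.symm.trans e₂
      exact toF_inj φ (ndigit_lt hb1 _ _) (ndigit_lt hb1 _ _)
        (add_right_cancel e₃)
    · -- surjectivity
      intro ℓ' hℓ'
      obtain ⟨hℓ'W, hTℓ'⟩ := Finset.mem_filter.mp hℓ'
      obtain ⟨hℓ'V, hℓ'D⟩ := Finset.mem_filter.mp hℓ'W
      have hb' := hboundW ℓ' hℓ'V
      refine ⟨fun j => dmap φ (plusOne k u j)
        (fun t => toF φ (ndigit (Fintype.card F) (ℓ' j) t)
          - toF φ (ndigit (Fintype.card F) (ℓ₀ j) t)), ?_, ?_⟩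
      · refine Finset.mem_filter.mpr ⟨(memV _ _).mpr fun j => ?_,
          dualDiff ℓ' ℓ₀ hb' hb₀ hℓ'D hℓ₀D⟩
        show dmap φ (plusOne k u j) (fun t => toF φ (ndigit (Fintype.card F) (ℓ' j) t)
            - toF φ (ndigit (Fintype.card F) (ℓ₀ j) t))
          < if j ∈ u then Fintype.card F ^ k j else 1
        by_cases hj : j ∈ u
        · rw [if_pos hj]
          have hone : plusOne k u j = k j + 1 := by simp [plusOne, hj]
          rw [hone, dmap_succ]
          have e1 : toF φ (ndigit (Fintype.card F) (ℓ' j) (k j)) = y ⟨j, hj⟩ := by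
            have h := congrFun hTℓ' ⟨j, hj⟩
            simpa only [hT] using h
          have e2 : toF φ (ndigit (Fintype.card F) (ℓ₀ j) (k j)) = y ⟨j, hj⟩ := by
            have h := congrFun hTℓ₀ ⟨j, hj⟩
            simpa only [hT] using h
          rw [e1, e2, sub_self, fromF_zero φ hφ, zero_mul, add_zero]
          exact dmap_lt φ (k j) _
        · rw [if_neg hj]
          have hz : dmap φ (plusOne k u j)
              (fun t => toF φ (ndigit (Fintype.card F) (ℓ' j) t)
                - toF φ (ndigit (Fintype.card F) (ℓ₀ j) t)) = 0 := by
            refine dmap_zero φ hφ _ _ fun t _ => ?_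
            rw [hzero _ ℓ' hℓ'V j hj, hzero _ ℓ₀ hℓ₀V j hj]
            simp [ndigit, toF_zero φ hφ]
          rw [hz]; norm_num
      · funext j
        show dmap φ (plusOne k u j) (fun t =>
            toF φ (ndigit (Fintype.card F) (dmap φ (plusOne k u j) (fun r =>
              toF φ (ndigit (Fintype.card F) (ℓ' j) r)
                - toF φ (ndigit (Fintype.card F) (ℓ₀ j) r))) t)
            + toF φ (ndigit (Fintype.card F) (ℓ₀ j) t)) = ℓ' j
        refine eq_of_ndigit_eq (dmap_lt φ (plusOne k u j) _) (hb' j) fun i => ?_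
        apply toF_inj φ (ndigit_lt hb1 _ _) (ndigit_lt hb1 _ _)
        rw [dsum_digit φ hφ (dmap_lt φ _ _) (hb₀ j) i,
          ddiff_digit φ hφ (hb' j) (hb₀ j) i, sub_add_cancel]
  -- counting
  have maps : ∀ ℓ ∈ W.filter fun ℓ => ∀ j : {j : Fin s // j ∈ u}, T ℓ j ≠ 0, T ℓ ∈ Q := by
    intro ℓ hℓ
    obtain ⟨h1, h2⟩ := Finset.mem_filter.mp hℓ
    exact Finset.mem_filter.mpr ⟨Finset.mem_image_of_mem T h1, h2⟩
  rw [Finset.card_eq_sum_card_fiberwise maps]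
  have hfib : ∀ y ∈ Q, ((W.filter fun ℓ => ∀ j : {j : Fin s // j ∈ u}, T ℓ j ≠ 0).filter
      fun ℓ => T ℓ = y).card = Kr.card := by
    intro y hy
    obtain ⟨hy1, hy2⟩ := Finset.mem_filter.mp hy
    rw [Finset.filter_filter]
    have hcong : (W.filter fun ℓ => (∀ j : {j : Fin s // j ∈ u}, T ℓ j ≠ 0) ∧ T ℓ = y)
        = W.filter fun ℓ => T ℓ = y := by
      refine Finset.filter_congr fun ℓ _ => ?_
      constructor
      · exact fun h => h.2
      · intro h
        exact ⟨fun j => by rw [h]; exact hy2 j, h⟩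
    rw [hcong]
    exact fiber y hy1
  rw [Finset.sum_congr rfl hfib, Finset.sum_const, smul_eq_mul]
  exact Nat.mul_comm _ _
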